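/- Let S and T be Polish spaces and E a convex pre-kernel from C_b(S) to C_b(S) which is continuous from above. Then the parameter-dependent map E_T((x,y), f) := E(x, f(·,y)) for (x,y) ∈ S×T and f ∈ C_b(S×T) is a convex pre-kernel from C_b(S×T) to C_b(S×T) which is continuous from above; in particular, for each f ∈ C_b(S×T), the function (x,y) ↦ E(x, f(·,y)) is bounded and continuous on S×T. -/

import Mathlib

open Filter

def IsBddR {S : Type*} (f : S → ℝ) : Prop := ∃ C : ℝ, ∀ x, |f x| ≤ C

def InCb {S : Type*} [TopologicalSpace S] (f : S → ℝ) : Prop :=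
  Continuous f ∧ IsBddR f

/-- `E` is a convex pre-kernel from `A` to `C_b(S)` which is continuous from
above. -/
def IsConvexKernelOn {S : Type*} [TopologicalSpace S] (A : Set (S → ℝ))
    (E : S → (S → ℝ) → ℝ) : Prop :=
  (∀ x : S, ∀ f ∈ A, ∀ g ∈ A, (∀ y, f y ≤ g y) → E x f ≤ E x g) ∧
  (∀ (x : S) (c : ℝ), E x (fun _ => c) = c) ∧
  (∀ f ∈ A, InCb fun x => E x f) ∧
  (∀ x : S, ∀ f ∈ A, ∀ g ∈ A, ∀ t ∈ Set.Icc (0:ℝ) 1,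
    E x (fun y => t * f y + (1 - t) * g y) ≤ t * E x f + (1 - t) * E x g) ∧
  (∀ x : S, ∀ (fn : ℕ → S → ℝ) (f : S → ℝ), (∀ n, fn n ∈ A) → f ∈ A →
    (∀ y, Antitone fun n => fn n y) →
    (∀ y, Tendsto (fun n => fn n y) atTop (nhds (f y))) →
    Tendsto (fun n => E x (fn n)) atTop (nhds (E x f)))

theorem stmt19 {S T : Type*}
    [MetricSpace S] [TopologicalSpace.SeparableSpace S] [CompleteSpace S]
    [MetricSpace T] [TopologicalSpace.SeparableSpace T] [CompleteSpace T]
    (E : S → (S → ℝ) → ℝ)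
    (hE : IsConvexKernelOn {f : S → ℝ | InCb f} E) :
    -- the parameter dependent version `E_T((x,y),f) = E(x, f(·,y))` is a convex
    -- pre-kernel from `C_b(S×T)` to `C_b(S×T)` continuous from above
    IsConvexKernelOn {f : S × T → ℝ | InCb f}
      (fun (p : S × T) (f : S × T → ℝ) => E p.1 (fun s => f (s, p.2))) := by
  obtain ⟨hmono, hconst, hcont, hconv, habove⟩ := hE
  have hconstA : ∀ c : ℝ, (fun _ : S => c) ∈ {f : S → ℝ | InCb f} := fun c =>
    ⟨continuous_const, ⟨|c|, fun _ => le_refl _⟩⟩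
  have memA : ∀ (f : S × T → ℝ), InCb f → ∀ y : T,
      (fun s => f (s, y)) ∈ {f : S → ℝ | InCb f} := by
    rintro f ⟨hfc, C, hC⟩ y
    exact ⟨hfc.comp (continuous_id.prodMk continuous_const), C, fun s => hC (s, y)⟩
  refine ⟨?_, ?_, ?_, ?_, ?_⟩
  · rintro p f hf g hg hle
    exact hmono p.1 _ (memA f hf p.2) _ (memA g hg p.2) (fun s => hle (s, p.2))
  · exact fun p c => hconst p.1 c
  · rintro f hf
    obtain ⟨hfc, C, hC⟩ := hf
    have hfA : InCb f := ⟨hfc, C, hC⟩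
    constructor
    · -- continuity of p ↦ E p.1 (f (·, p.2))
      rw [continuous_iff_seqContinuous]
      intro u q hu
      have hx : Tendsto (fun m => (u m).1) atTop (nhds q.1) :=
        (continuous_fst.tendsto q).comp hu
      have hy : Tendsto (fun m => (u m).2) atTop (nhds q.2) :=
        (continuous_snd.tendsto q).comp hu
      set K : ℕ → Set T := fun n => insert q.2 (Set.range fun m => (u (m + n)).2) with hKdef
      have hKcomp : ∀ n, IsCompact (K n) := fun n =>
        (hy.comp (tendsto_add_atTop_nat n)).isCompact_insert_range
      have hKne : ∀ n, (K n).Nonempty := fun n => ⟨q.2, Set.mem_insert _ _⟩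
      have hq2K : ∀ n, q.2 ∈ K n := fun n => Set.mem_insert _ _
      have hKsub : ∀ n, K (n + 1) ⊆ K n := by
        intro n t ht
        rcases Set.mem_insert_iff.mp ht with rfl | ⟨m, rfl⟩
        · exact Set.mem_insert _ _
        · refine Set.mem_insert_of_mem _ ⟨m + 1, ?_⟩
          have e : m + 1 + n = m + (n + 1) := by omega
          show (u (m + 1 + n)).2 = _
          rw [e]
      have hmemK : ∀ n m, n ≤ m → (u m).2 ∈ K n := by
        intro n m hnm
        refine Set.mem_insert_of_mem _ ⟨m - n, ?_⟩
        have e : m - n + n = m := by omega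
        show (u (m - n + n)).2 = _
        rw [e]
      set gu : ℕ → S → ℝ := fun n s => sSup ((fun t => f (s, t)) '' K n) with hgudef
      set gl : ℕ → S → ℝ := fun n s => sInf ((fun t => f (s, t)) '' K n) with hgldef
      have hbddA : ∀ n s, BddAbove ((fun t => f (s, t)) '' K n) := by
        intro n s
        refine ⟨C, ?_⟩
        rintro _ ⟨t, _, rfl⟩
        exact (abs_le.mp (hC (s, t))).2
      have hbddB : ∀ n s, BddBelow ((fun t => f (s, t)) '' K n) := by
        intro n s
        refine ⟨-C, ?_⟩
        rintro _ ⟨t, _, rfl⟩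
        exact (abs_le.mp (hC (s, t))).1
      have hgu_ge : ∀ n s t, t ∈ K n → f (s, t) ≤ gu n s := fun n s t ht =>
        le_csSup (hbddA n s) (Set.mem_image_of_mem _ ht)
      have hgl_le : ∀ n s t, t ∈ K n → gl n s ≤ f (s, t) := fun n s t ht =>
        csInf_le (hbddB n s) (Set.mem_image_of_mem _ ht)
      have hguA : ∀ n, gu n ∈ {f : S → ℝ | InCb f} := by
        intro n
        refine ⟨(hKcomp n).continuous_sSup (f := fun s t => f (s, t)) hfc, C, fun s => ?_⟩
        rw [abs_le]
        constructor
        · exact le_trans (abs_le.mp (hC (s, q.2))).1 (hgu_ge n s q.2 (hq2K n))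
        · apply csSup_le ((hKne n).image _)
          rintro _ ⟨t, _, rfl⟩
          exact (abs_le.mp (hC (s, t))).2
      have hglA : ∀ n, gl n ∈ {f : S → ℝ | InCb f} := by
        intro n
        refine ⟨(hKcomp n).continuous_sInf (f := fun s t => f (s, t)) hfc, C, fun s => ?_⟩
        rw [abs_le]
        constructor
        · apply le_csInf ((hKne n).image _)
          rintro _ ⟨t, _, rfl⟩
          exact (abs_le.mp (hC (s, t))).1
        · exact le_trans (hgl_le n s q.2 (hq2K n)) (abs_le.mp (hC (s, q.2))).2
      have hgu_anti : ∀ s, Antitone fun n => gu n s := by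
        intro s
        apply antitone_nat_of_succ_le
        intro n
        exact csSup_le_csSup (hbddA n s) ((hKne (n + 1)).image _)
          (Set.image_mono (hKsub n))
      have hgl_mono : ∀ s, Monotone fun n => gl n s := by
        intro s
        apply monotone_nat_of_le_succ
        intro n
        exact csInf_le_csInf (hbddB n s) ((hKne (n + 1)).image _)
          (Set.image_mono (hKsub n))
      have hys : ∀ s, Tendsto (fun m => f (s, (u m).2)) atTop (nhds (f (s, q.2))) := by
        intro s
        exact ((hfc.comp (continuous_const.prodMk continuous_id)).tendsto q.2).comp hy
      have hgu_lim : ∀ s, Tendsto (fun n => gu n s) atTop (nhds (f (s, q.2))) := by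
        intro s
        rw [Metric.tendsto_atTop]
        intro ε hε
        obtain ⟨N, hN⟩ := Metric.tendsto_atTop.mp (hys s) (ε / 2) (by positivity)
        refine ⟨N, fun n hn => ?_⟩
        have h1 : f (s, q.2) ≤ gu n s := hgu_ge n s q.2 (hq2K n)
        have h2 : gu n s ≤ f (s, q.2) + ε / 2 := by
          apply csSup_le ((hKne n).image _)
          rintro _ ⟨t, ht, rfl⟩
          rcases Set.mem_insert_iff.mp ht with rfl | ⟨m, rfl⟩
          · linarith
          · have := hN (m + n) (le_trans hn (Nat.le_add_left n m))
            rw [Real.dist_eq] at this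
            have := (abs_lt.mp this).2
            linarith
        rw [Real.dist_eq, abs_lt]
        constructor <;> linarith
      have hgl_lim : ∀ s, Tendsto (fun n => gl n s) atTop (nhds (f (s, q.2))) := by
        intro s
        rw [Metric.tendsto_atTop]
        intro ε hε
        obtain ⟨N, hN⟩ := Metric.tendsto_atTop.mp (hys s) (ε / 2) (by positivity)
        refine ⟨N, fun n hn => ?_⟩
        have h1 : gl n s ≤ f (s, q.2) := hgl_le n s q.2 (hq2K n)
        have h2 : f (s, q.2) - ε / 2 ≤ gl n s := by
          apply le_csInf ((hKne n).image _)
          rintro _ ⟨t, ht, rfl⟩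
          rcases Set.mem_insert_iff.mp ht with rfl | ⟨m, rfl⟩
          · linarith
          · have := hN (m + n) (le_trans hn (Nat.le_add_left n m))
            rw [Real.dist_eq] at this
            have := (abs_lt.mp this).1
            linarith
        rw [Real.dist_eq, abs_lt]
        constructor <;> linarith
      set fq : S → ℝ := fun s => f (s, q.2) with hfqdef
      have hfqA : fq ∈ {f : S → ℝ | InCb f} := memA f hfA q.2
      -- (a) E q.1 (gu n) → E q.1 fq, by continuity from above
      have hEgu : Tendsto (fun n => E q.1 (gu n)) atTop (nhds (E q.1 fq)) :=
        habove q.1 gu fq hguA hfqA hgu_anti hgu_lim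
      -- (b) E q.1 (gl n) → E q.1 fq, using convexity
      set qn : ℕ → S → ℝ := fun n s => 2 * f (s, q.2) - gl n s with hqndef
      have hqnA : ∀ n, qn n ∈ {f : S → ℝ | InCb f} := by
        intro n
        obtain ⟨hglc, D, hD⟩ := hglA n
        refine ⟨(continuous_const.mul (memA f hfA q.2).1).sub hglc, 2 * C + D, fun s => ?_⟩
        have h1 := abs_le.mp (hC (s, q.2))
        have h2 := abs_le.mp (hD s)
        rw [abs_le]
        constructor <;> simp only [hqndef] <;> nlinarith [h1.1, h1.2, h2.1, h2.2]
      have hqn_anti : ∀ s, Antitone fun n => qn n s := by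
        intro s n m hnm
        have := hgl_mono s hnm
        simp only [hqndef]
        linarith
      have hqn_lim : ∀ s, Tendsto (fun n => qn n s) atTop (nhds (fq s)) := by
        intro s
        have h : Tendsto (fun n : ℕ => 2 * f (s, q.2) - gl n s) atTop
            (nhds (2 * f (s, q.2) - f (s, q.2))) :=
          Tendsto.sub tendsto_const_nhds (hgl_lim s)
        have e : 2 * f (s, q.2) - f (s, q.2) = fq s := by simp [hfqdef]; ring
        rw [e] at h
        exact h
      have hEqn : Tendsto (fun n => E q.1 (qn n)) atTop (nhds (E q.1 fq)) :=
        habove q.1 qn fq hqnA hfqA hqn_anti hqn_lim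
      have hconvx : ∀ n, E q.1 fq ≤ 1 / 2 * E q.1 (gl n) + (1 - 1 / 2) * E q.1 (qn n) := by
        intro n
        have hc := hconv q.1 (gl n) (hglA n) (qn n) (hqnA n) (1 / 2)
          ⟨by norm_num, by norm_num⟩
        have e : (fun s => 1 / 2 * gl n s + (1 - 1 / 2) * qn n s) = fq := by
          funext s
          simp only [hqndef, hfqdef]
          ring
        rwa [e] at hc
      have hgl_le_fq : ∀ n, E q.1 (gl n) ≤ E q.1 fq := fun n =>
        hmono q.1 _ (hglA n) _ hfqA (fun s => hgl_le n s q.2 (hq2K n))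
      have hEgl : Tendsto (fun n => E q.1 (gl n)) atTop (nhds (E q.1 fq)) := by
        have hlow : Tendsto (fun n => 2 * E q.1 fq - E q.1 (qn n)) atTop
            (nhds (2 * E q.1 fq - E q.1 fq)) := tendsto_const_nhds.sub hEqn
        have e : 2 * E q.1 fq - E q.1 fq = E q.1 fq := by ring
        rw [e] at hlow
        refine tendsto_of_tendsto_of_tendsto_of_le_of_le hlow tendsto_const_nhds
          (fun n => ?_) hgl_le_fq
        have := hconvx n
        linarith
      -- (c) conclusion
      rw [Metric.tendsto_atTop]
      intro ε hε
      obtain ⟨n₁, hn₁⟩ := Metric.tendsto_atTop.mp hEgu (ε / 2) (by positivity)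
      obtain ⟨n₂, hn₂⟩ := Metric.tendsto_atTop.mp hEgl (ε / 2) (by positivity)
      set n := max n₁ n₂ with hn
      have hgu_x : Tendsto (fun m => E (u m).1 (gu n)) atTop (nhds (E q.1 (gu n))) :=
        ((hcont (gu n) (hguA n)).1.tendsto q.1).comp hx
      have hgl_x : Tendsto (fun m => E (u m).1 (gl n)) atTop (nhds (E q.1 (gl n))) :=
        ((hcont (gl n) (hglA n)).1.tendsto q.1).comp hx
      obtain ⟨M₁, hM₁⟩ := Metric.tendsto_atTop.mp hgu_x (ε / 2) (by positivity)
      obtain ⟨M₂, hM₂⟩ := Metric.tendsto_atTop.mp hgl_x (ε / 2) (by positivity)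
      refine ⟨max n (max M₁ M₂), fun m hm => ?_⟩
      have hmn : n ≤ m := le_trans (le_max_left _ _) hm
      have hmM₁ : M₁ ≤ m := le_trans (le_trans (le_max_left _ _) (le_max_right n _)) hm
      have hmM₂ : M₂ ≤ m := le_trans (le_trans (le_max_right _ _) (le_max_right n _)) hm
      have hub : E (u m).1 (fun s => f (s, (u m).2)) ≤ E (u m).1 (gu n) :=
        hmono (u m).1 _ (memA f hfA (u m).2) _ (hguA n)
          (fun s => hgu_ge n s (u m).2 (hmemK n m hmn))
      have hlb : E (u m).1 (gl n) ≤ E (u m).1 (fun s => f (s, (u m).2)) :=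
        hmono (u m).1 _ (hglA n) _ (memA f hfA (u m).2)
          (fun s => hgl_le n s (u m).2 (hmemK n m hmn))
      have d1 := hM₁ m hmM₁
      have d2 := hM₂ m hmM₂
      have d3 := hn₁ n (le_max_left _ _)
      have d4 := hn₂ n (le_max_right _ _)
      rw [Real.dist_eq] at d1 d2 d3 d4
      have d1' := abs_lt.mp d1
      have d2' := abs_lt.mp d2
      have d3' := abs_lt.mp d3
      have d4' := abs_lt.mp d4
      show dist (E (u m).1 (fun s => f (s, (u m).2))) (E q.1 fq) < ε
      rw [Real.dist_eq, abs_lt]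
      constructor <;> linarith
    · refine ⟨C, fun p => ?_⟩
      have h1 := hmono p.1 _ (hconstA (-C)) _ (memA f hfA p.2)
        (fun s => (abs_le.mp (hC (s, p.2))).1)
      have h2 := hmono p.1 _ (memA f hfA p.2) _ (hconstA C)
        (fun s => (abs_le.mp (hC (s, p.2))).2)
      rw [hconst] at h1 h2
      exact abs_le.mpr ⟨h1, h2⟩
  · rintro p f hf g hg t ht
    exact hconv p.1 _ (memA f hf p.2) _ (memA g hg p.2) t ht
  · rintro p fn f hfn hf hanti hlim
    exact habove p.1 (fun n s => fn n (s, p.2)) _ (fun n => memA _ (hfn n) p.2)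
      (memA f hf p.2) (fun s a b hab => hanti (s, p.2) hab) (fun s => hlim (s, p.2))
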